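/- Let C be a finitely complete category. Then every binary product projection in C is an extremal epimorphism if and only if every identity morphism in C is coextensive. -/

import Mathlib

open CategoryTheory CategoryTheory.Limits

universe v u

variable {C : Type u} [Category.{v} C]

/-- `i₁ : X₁ ⟶ X` and `i₂ : X₂ ⟶ X` form a binary coproduct diagram. -/
def IsCoprodDiagram {X₁ X₂ X : C} (i₁ : X₁ ⟶ X) (i₂ : X₂ ⟶ X) : Prop :=
  Nonempty (IsColimit (BinaryCofan.mk i₁ i₂))

/-- `p₁ : X ⟶ X₁` and `p₂ : X ⟶ X₂` form a binary product diagram. -/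
def IsProdDiagram {X X₁ X₂ : C} (p₁ : X ⟶ X₁) (p₂ : X ⟶ X₂) : Prop :=
  Nonempty (IsLimit (BinaryFan.mk p₁ p₂))

/-- Condition (E1): pullbacks of `f` along both inclusions of any binary coproduct diagram
exist and the resulting legs form a binary coproduct diagram. -/
def SatE1 {A X : C} (f : A ⟶ X) : Prop :=
  ∀ {X₁ X₂ : C} (x₁ : X₁ ⟶ X) (x₂ : X₂ ⟶ X), IsCoprodDiagram x₁ x₂ →
    ∃ (A₁ A₂ : C) (a₁ : A₁ ⟶ A) (a₂ : A₂ ⟶ A) (f₁ : A₁ ⟶ X₁) (f₂ : A₂ ⟶ X₂),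
      IsPullback a₁ f₁ f x₁ ∧ IsPullback a₂ f₂ f x₂ ∧ IsCoprodDiagram a₁ a₂

/-- Condition (E2): in any commutative diagram over `f` whose rows are binary coproduct
diagrams, both squares are pullbacks. -/
def SatE2 {A X : C} (f : A ⟶ X) : Prop :=
  ∀ {A₁ A₂ X₁ X₂ : C} (a₁ : A₁ ⟶ A) (a₂ : A₂ ⟶ A) (x₁ : X₁ ⟶ X) (x₂ : X₂ ⟶ X)
    (f₁ : A₁ ⟶ X₁) (f₂ : A₂ ⟶ X₂),
    a₁ ≫ f = f₁ ≫ x₁ → a₂ ≫ f = f₂ ≫ x₂ →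
    IsCoprodDiagram x₁ x₂ → IsCoprodDiagram a₁ a₂ →
    IsPullback a₁ f₁ f x₁ ∧ IsPullback a₂ f₂ f x₂

/-- A morphism is extensive if it satisfies (E1) and (E2). -/
def Extensive {A X : C} (f : A ⟶ X) : Prop := SatE1 f ∧ SatE2 f

/-- Condition (C1): pushouts of `f` along both projections of any binary product diagram
exist and the resulting legs form a binary product diagram. -/
def SatC1 {A X : C} (f : A ⟶ X) : Prop :=
  ∀ {A₁ A₂ : C} (p₁ : A ⟶ A₁) (p₂ : A ⟶ A₂), IsProdDiagram p₁ p₂ →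
    ∃ (X₁ X₂ : C) (q₁ : X ⟶ X₁) (q₂ : X ⟶ X₂) (f₁ : A₁ ⟶ X₁) (f₂ : A₂ ⟶ X₂),
      IsPushout p₁ f f₁ q₁ ∧ IsPushout p₂ f f₂ q₂ ∧ IsProdDiagram q₁ q₂

/-- Condition (C2): in any commutative diagram over `f` whose rows are binary product
diagrams, both squares are pushouts. -/
def SatC2 {A X : C} (f : A ⟶ X) : Prop :=
  ∀ {A₁ A₂ X₁ X₂ : C} (p₁ : A ⟶ A₁) (p₂ : A ⟶ A₂) (q₁ : X ⟶ X₁) (q₂ : X ⟶ X₂)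
    (f₁ : A₁ ⟶ X₁) (f₂ : A₂ ⟶ X₂),
    p₁ ≫ f₁ = f ≫ q₁ → p₂ ≫ f₂ = f ≫ q₂ →
    IsProdDiagram p₁ p₂ → IsProdDiagram q₁ q₂ →
    IsPushout p₁ f f₁ q₁ ∧ IsPushout p₂ f f₂ q₂

/-- A morphism is coextensive if it satisfies (C1) and (C2). -/
def Coextensive {A X : C} (f : A ⟶ X) : Prop := SatC1 f ∧ SatC2 f

/-- A coproduct inclusion: a morphism admitting a complementary inclusion forming
a binary coproduct diagram. -/
def IsCoprodInclusion {A X : C} (ι : A ⟶ X) : Prop :=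
  ∃ (A' : C) (ι' : A' ⟶ X), IsCoprodDiagram ι ι'

/-- An extremal epimorphism: whenever `e = i ≫ m` with `m` a monomorphism, `m` is an
isomorphism. -/
def IsExtremalEpi {A B : C} (e : A ⟶ B) : Prop :=
  ∀ {I : C} (i : A ⟶ I) (m : I ⟶ B), Mono m → i ≫ m = e → IsIso m

/-- The binary strict refinement property for an object `X`. -/
def BinaryStrictRefinement (X : C) : Prop :=
  ∀ {A₁ A₂ B₁ B₂ : C} (a₁ : X ⟶ A₁) (a₂ : X ⟶ A₂) (b₁ : X ⟶ B₁) (b₂ : X ⟶ B₂),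
    IsProdDiagram a₁ a₂ → IsProdDiagram b₁ b₂ →
    ∃ (C₁₁ C₁₂ C₂₁ C₂₂ : C)
      (α₁₁ : A₁ ⟶ C₁₁) (α₁₂ : A₁ ⟶ C₁₂) (α₂₁ : A₂ ⟶ C₂₁) (α₂₂ : A₂ ⟶ C₂₂)
      (β₁₁ : B₁ ⟶ C₁₁) (β₁₂ : B₂ ⟶ C₁₂) (β₂₁ : B₁ ⟶ C₂₁) (β₂₂ : B₂ ⟶ C₂₂),
      a₁ ≫ α₁₁ = b₁ ≫ β₁₁ ∧ a₁ ≫ α₁₂ = b₂ ≫ β₁₂ ∧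
      a₂ ≫ α₂₁ = b₁ ≫ β₂₁ ∧ a₂ ≫ α₂₂ = b₂ ≫ β₂₂ ∧
      IsProdDiagram α₁₁ α₁₂ ∧ IsProdDiagram α₂₁ α₂₂ ∧
      IsProdDiagram β₁₁ β₂₁ ∧ IsProdDiagram β₁₂ β₂₂

/-- A jointly monomorphic pair which is a reflexive, symmetric and transitive relation. -/
def IsEquivalenceRelationPair {R X : C} (r₁ r₂ : R ⟶ X) : Prop :=
  (∀ {T : C} (a b : T ⟶ R), a ≫ r₁ = b ≫ r₁ → a ≫ r₂ = b ≫ r₂ → a = b) ∧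
  (∃ d : X ⟶ R, d ≫ r₁ = 𝟙 X ∧ d ≫ r₂ = 𝟙 X) ∧
  (∃ s : R ⟶ R, s ≫ r₁ = r₂ ∧ s ≫ r₂ = r₁) ∧
  (∀ {P : C} (p₁ p₂ : P ⟶ R), IsPullback p₁ p₂ r₂ r₁ →
    ∃ t : P ⟶ R, t ≫ r₁ = p₁ ≫ r₁ ∧ t ≫ r₂ = p₂ ≫ r₂)


section Helpers

variable {C : Type u} [Category.{v} C]

lemma IsProdDiagram.hom_ext' {X X₁ X₂ : C} {p₁ : X ⟶ X₁} {p₂ : X ⟶ X₂}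
    (h : IsProdDiagram p₁ p₂) {T : C} {a b : T ⟶ X}
    (h₁ : a ≫ p₁ = b ≫ p₁) (h₂ : a ≫ p₂ = b ≫ p₂) : a = b :=
  BinaryFan.IsLimit.hom_ext h.some h₁ h₂

lemma IsProdDiagram.lift' {X X₁ X₂ : C} {p₁ : X ⟶ X₁} {p₂ : X ⟶ X₂}
    (h : IsProdDiagram p₁ p₂) {T : C} (t₁ : T ⟶ X₁) (t₂ : T ⟶ X₂) :
    ∃ l : T ⟶ X, l ≫ p₁ = t₁ ∧ l ≫ p₂ = t₂ := by
  obtain ⟨l, hl₁, hl₂⟩ := BinaryFan.IsLimit.lift' h.some t₁ t₂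
  exact ⟨l, hl₁, hl₂⟩

lemma isProdDiagram_mk {X X₁ X₂ : C} (p₁ : X ⟶ X₁) (p₂ : X ⟶ X₂)
    (lift : ∀ {T : C}, (T ⟶ X₁) → (T ⟶ X₂) → (T ⟶ X))
    (fac₁ : ∀ {T : C} (t₁ : T ⟶ X₁) (t₂ : T ⟶ X₂), lift t₁ t₂ ≫ p₁ = t₁)
    (fac₂ : ∀ {T : C} (t₁ : T ⟶ X₁) (t₂ : T ⟶ X₂), lift t₁ t₂ ≫ p₂ = t₂)
    (uniq : ∀ {T : C} (a b : T ⟶ X), a ≫ p₁ = b ≫ p₁ → a ≫ p₂ = b ≫ p₂ → a = b) :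
    IsProdDiagram p₁ p₂ := by
  refine ⟨BinaryFan.isLimitMk (fun s => lift s.fst s.snd) (fun s => fac₁ _ _)
    (fun s => fac₂ _ _) (fun s m h₁ h₂ => uniq _ _ ?_ ?_)⟩
  · exact h₁.trans (fac₁ _ _).symm
  · exact h₂.trans (fac₂ _ _).symm

lemma IsProdDiagram.swap {X X₁ X₂ : C} {p₁ : X ⟶ X₁} {p₂ : X ⟶ X₂}
    (h : IsProdDiagram p₁ p₂) : IsProdDiagram p₂ p₁ := by
  refine isProdDiagram_mk _ _ (fun t₂ t₁ => (h.lift' t₁ t₂).choose) ?_ ?_ ?_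
  · intro T t₂ t₁; exact (h.lift' t₁ t₂).choose_spec.2
  · intro T t₂ t₁; exact (h.lift' t₁ t₂).choose_spec.1
  · intro T a b h₂ h₁; exact h.hom_ext' h₁ h₂

/-- Pushout of a morphism along the identity, where the parallel copy is an iso. -/
lemma isPushout_id_of_isIso {X A₁ X₁ : C} {p : X ⟶ A₁} {f : A₁ ⟶ X₁} {q : X ⟶ X₁}
    (w : p ≫ f = q) (hf : IsIso f) : IsPushout p (𝟙 X) f q := by
  have : IsIso f := hf
  exact IsPushout.of_vert_isIso ⟨by simp [w]⟩

lemma isIso_of_isPushout_id {X A₁ X₁ : C} {p : X ⟶ A₁} {f : A₁ ⟶ X₁} {q : X ⟶ X₁}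
    (po : IsPushout p (𝟙 X) f q) : IsIso f := by
  have w : p ≫ (𝟙 A₁) = (𝟙 X) ≫ p := by simp
  refine ⟨po.desc (𝟙 A₁) p w, po.inl_desc _ _ _, ?_⟩
  apply po.hom_ext
  · rw [← Category.assoc, po.inl_desc, Category.id_comp, Category.comp_id]
  · rw [← Category.assoc, po.inr_desc, Category.comp_id]
    have := po.w
    simp only [Category.id_comp] at this
    exact this

lemma epi_of_isExtremalEpi [HasFiniteLimits C] {A B : C} {e : A ⟶ B}
    (h : IsExtremalEpi e) : Epi e := by
  constructor
  intro T u v huv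
  have hiso : IsIso (equalizer.ι u v) :=
    h (equalizer.lift e huv) (equalizer.ι u v) inferInstance (equalizer.lift_ι _ _)
  rw [← cancel_epi (equalizer.ι u v), equalizer.condition]

/-- Key lemma for the backward direction. -/
lemma extremalEpi_of_satC2 [HasFiniteLimits C] {P X₁ X₂ : C}
    (hco : SatC2 (𝟙 P)) (p₁ : P ⟶ X₁) (p₂ : P ⟶ X₂)
    (hp : IsProdDiagram p₁ p₂) : IsExtremalEpi p₁ := by
  intro I i m hm hfac
  -- W := I ⨯ X₂
  obtain ⟨k, hk₁, hk₂⟩ := hp.lift' ((prod.fst : I ⨯ X₂ ⟶ I) ≫ m) prod.snd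
  have hwk : prod.lift i p₂ ≫ k = 𝟙 P := by
    apply hp.hom_ext'
    · rw [Category.assoc, hk₁, ← Category.assoc, prod.lift_fst, hfac, Category.id_comp]
    · rw [Category.assoc, hk₂, prod.lift_snd, Category.id_comp]
  have hkmono : ∀ {T : C} (a b : T ⟶ I ⨯ X₂), a ≫ k = b ≫ k → a = b := by
    intro T a b hab
    apply Limits.prod.hom_ext
    · have h1 : a ≫ k ≫ p₁ = b ≫ k ≫ p₁ := by rw [← Category.assoc, hab, Category.assoc]
      rw [hk₁, ← Category.assoc, ← Category.assoc] at h1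
      exact (cancel_mono m).mp h1
    · have h2 : a ≫ k ≫ p₂ = b ≫ k ≫ p₂ := by rw [← Category.assoc, hab, Category.assoc]
      rwa [hk₂] at h2
  have hkw : k ≫ prod.lift i p₂ = 𝟙 (I ⨯ X₂) := by
    apply hkmono
    rw [Category.assoc, hwk, Category.comp_id, Category.id_comp]
  -- (i, p₂) is a product diagram
  have hip : IsProdDiagram i p₂ := by
    refine isProdDiagram_mk _ _ (fun t₁ t₂ => prod.lift t₁ t₂ ≫ k) ?_ ?_ ?_
    · intro T t₁ t₂
      have hki : k ≫ i = prod.fst := by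
        have h0 : k ≫ prod.lift i p₂ ≫ prod.fst = prod.fst := by
          rw [← Category.assoc, hkw, Category.id_comp]
        rwa [prod.lift_fst] at h0
      rw [Category.assoc, hki, prod.lift_fst]
    · intro T t₁ t₂
      rw [Category.assoc, hk₂, prod.lift_snd]
    · intro T a b h₁ h₂
      have hab : a ≫ prod.lift i p₂ = b ≫ prod.lift i p₂ := by
        apply Limits.prod.hom_ext <;> simp [h₁, h₂]
      calc a = a ≫ prod.lift i p₂ ≫ k := by rw [hwk, Category.comp_id]
        _ = b ≫ prod.lift i p₂ ≫ k := by rw [← Category.assoc, hab, Category.assoc]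
        _ = b := by rw [hwk, Category.comp_id]
  -- apply C2
  have := hco i p₂ p₁ p₂ m (𝟙 X₂) (by simp [hfac]) (by simp) hip hp
  exact isIso_of_isPushout_id this.1

end Helpers

/-- In a finitely complete category, every binary product projection is an extremal
epimorphism iff every identity morphism is coextensive. -/
theorem extremal_projections_iff_id_coextensive [HasFiniteLimits C] :
    (∀ {P X₁ X₂ : C} (p₁ : P ⟶ X₁) (p₂ : P ⟶ X₂),
      IsProdDiagram p₁ p₂ → IsExtremalEpi p₁ ∧ IsExtremalEpi p₂) ↔
      (∀ X : C, Coextensive (𝟙 X)) := by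
  constructor
  · -- forward: extremal projections ⟹ identities coextensive
    intro hyp X
    constructor
    · -- SatC1
      intro A₁ A₂ p₁ p₂ hp
      exact ⟨A₁, A₂, p₁, p₂, 𝟙 A₁, 𝟙 A₂,
        isPushout_id_of_isIso (by simp) inferInstance,
        isPushout_id_of_isIso (by simp) inferInstance, hp⟩
    · -- SatC2
      intro A₁ A₂ X₁ X₂ p₁ p₂ q₁ q₂ f₁ f₂ w₁ w₂ hp hq
      simp only [Category.id_comp] at w₁ w₂
      -- fst/snd of products are epi
      have epiProj : ∀ (S T : C), Epi (prod.fst : S ⨯ T ⟶ S) := by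
        intro S T
        exact epi_of_isExtremalEpi
          ((hyp (prod.fst : S ⨯ T ⟶ S) prod.snd ⟨prodIsProd S T⟩).1)
      have monoLemma : ∀ {B₁ B₂ Y₁ Y₂ : C} (r₁ : X ⟶ B₁) (r₂ : X ⟶ B₂)
          (s₁ : X ⟶ Y₁) (s₂ : X ⟶ Y₂) (g₁ : B₁ ⟶ Y₁) (g₂ : B₂ ⟶ Y₂),
          r₁ ≫ g₁ = s₁ → r₂ ≫ g₂ = s₂ →
          IsProdDiagram r₁ r₂ → IsProdDiagram s₁ s₂ → Mono g₁ := by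
        intro B₁ B₂ Y₁ Y₂ r₁ r₂ s₁ s₂ g₁ g₂ e₁ e₂ hr hs
        constructor
        intro S u v huv
        obtain ⟨z, hz₁, hz₂⟩ := hr.lift' ((prod.fst : S ⨯ B₂ ⟶ S) ≫ u) prod.snd
        obtain ⟨z', hz'₁, hz'₂⟩ := hr.lift' ((prod.fst : S ⨯ B₂ ⟶ S) ≫ v) prod.snd
        have hzz : z = z' := by
          apply hs.hom_ext'
          · rw [← e₁, ← Category.assoc, ← Category.assoc, hz₁, hz'₁,
              Category.assoc, Category.assoc, huv]
          · rw [← e₂, ← Category.assoc, ← Category.assoc, hz₂, hz'₂]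
        have : (prod.fst : S ⨯ B₂ ⟶ S) ≫ u = prod.fst ≫ v := by
          rw [← hz₁, ← hz'₁, hzz]
        exact (cancel_epi _).mp this
      have hm₁ : Mono f₁ := monoLemma p₁ p₂ q₁ q₂ f₁ f₂ w₁ w₂ hp hq
      have hm₂ : Mono f₂ := monoLemma p₂ p₁ q₂ q₁ f₂ f₁ w₂ w₁ hp.swap hq.swap
      have hiso₁ : IsIso f₁ := (hyp q₁ q₂ hq).1 p₁ f₁ hm₁ w₁
      have hiso₂ : IsIso f₂ := (hyp q₁ q₂ hq).2 p₂ f₂ hm₂ w₂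
      exact ⟨isPushout_id_of_isIso w₁ hiso₁, isPushout_id_of_isIso w₂ hiso₂⟩
  · -- backward
    intro hco P X₁ X₂ p₁ p₂ hp
    exact ⟨extremalEpi_of_satC2 (hco P).2 p₁ p₂ hp,
      extremalEpi_of_satC2 (hco P).2 p₂ p₁ hp.swap⟩
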